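/- Let a > -1 and define the Bessel heat kernel p^{(a)}(z,ζ,t) = (2t)^{-(a+1)/2} (zζ/(2t))^{(1-a)/2} I_{(a-1)/2}(zζ/(2t)) e^{-(z²+ζ²)/(4t)}. Then for every z > 0 and t > 0, ∫₀^∞ p^{(a)}(z,ζ,t) ζ^a dζ = 1. -/
import Mathlib


open MeasureTheory

/-- The modified Bessel function of the first kind,
`I_ν(x) = Σ_{m≥0} (x/2)^{2m+ν} / (m! Γ(m+ν+1))`. -/
noncomputable def besselI (ν x : ℝ) : ℝ :=
  ∑' m : ℕ, (x / 2) ^ (2 * (m : ℝ) + ν) / ((Nat.factorial m) * Real.Gamma ((m : ℝ) + ν + 1))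

/-- The Bessel heat kernel
`p^{(a)}(z,ζ,t) = (2t)^{-(a+1)/2} (zζ/(2t))^{(1-a)/2} I_{(a-1)/2}(zζ/(2t)) e^{-(z²+ζ²)/(4t)}`. -/
noncomputable def besselHeat (a z ζ t : ℝ) : ℝ :=
  (2 * t) ^ (-(a + 1)/2) * (z * ζ / (2 * t)) ^ ((1 - a)/2) *
    besselI ((a - 1)/2) (z * ζ / (2 * t)) * Real.exp (-(z^2 + ζ^2)/(4 * t))

open Real in
/-- Per-term identity: expanding the Bessel series term by term. -/
lemma besselHeat_term_eq (a : ℝ) (ha : -1 < a) (z t ζ : ℝ) (hz : 0 < z) (ht : 0 < t)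
    (hζ : 0 < ζ) (m : ℕ) :
    (2 * t) ^ (-(a + 1)/2) * (z * ζ / (2 * t)) ^ ((1 - a)/2) *
      ((z * ζ / (2 * t) / 2) ^ (2 * (m : ℝ) + (a - 1)/2) /
        ((Nat.factorial m) * Real.Gamma ((m : ℝ) + (a - 1)/2 + 1))) *
      Real.exp (-(z^2 + ζ^2)/(4 * t)) * ζ ^ a
    = ((2*t) ^ (-(a+1)/2) * (2:ℝ) ^ (-(2*(m:ℝ)+(a-1)/2)) * (z/(2*t)) ^ (2*(m:ℝ)) *
        Real.exp (-(z^2)/(4*t)) / ((Nat.factorial m) * Real.Gamma ((m : ℝ) + (a - 1)/2 + 1))) *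
      (ζ ^ (2*(m:ℝ)+a) * Real.exp (-(1/(4*t)) * ζ^2)) := by
  have hK : (0:ℝ) < (Nat.factorial m) * Real.Gamma ((m : ℝ) + (a - 1)/2 + 1) := by
    have hm : (0:ℝ) ≤ m := Nat.cast_nonneg m
    have : (0:ℝ) < (m : ℝ) + (a - 1)/2 + 1 := by linarith
    exact mul_pos (by exact_mod_cast Nat.factorial_pos m) (Real.Gamma_pos_of_pos this)
  have h2t : (0:ℝ) < 2*t := by positivity
  have hX : (0:ℝ) < z * ζ / (2*t) := by positivity
  have hX2 : (0:ℝ) < z * ζ / (2*t) / 2 := by positivity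
  have hz2t : (0:ℝ) < z / (2*t) := by positivity
  have hlog1 : log (2*t) = log 2 + log t := log_mul two_ne_zero ht.ne'
  have hlog3 : log (z*ζ/(2*t)) = log z + log ζ - (log 2 + log t) := by
    rw [log_div (by positivity) h2t.ne', log_mul hz.ne' hζ.ne', hlog1]
  have hlog2 : log (z*ζ/(2*t)/2) = log z + log ζ - (log 2 + log t) - log 2 := by
    rw [log_div hX.ne' two_ne_zero, hlog3]
  have hlog4 : log (z/(2*t)) = log z - (log 2 + log t) := by
    rw [log_div hz.ne' h2t.ne', hlog1]
  simp only [Real.rpow_def_of_pos h2t, Real.rpow_def_of_pos hX, Real.rpow_def_of_pos hX2,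
    Real.rpow_def_of_pos hζ, Real.rpow_def_of_pos hz2t, Real.rpow_def_of_pos two_pos]
  rw [show ∀ A B C D E K : ℝ, A * B * (C / K) * D * E = A * B * C * D * E / K from
    fun _ _ _ _ _ _ => by ring]
  rw [div_mul_eq_mul_div]
  congr 1
  simp only [← Real.exp_add]
  rw [Real.exp_eq_exp, hlog1, hlog2, hlog3, hlog4]
  ring

open Real in
/-- Value of the constant obtained after integrating each term. -/
lemma besselHeat_const_eq (a : ℝ) (ha : -1 < a) (z t : ℝ) (hz : 0 < z) (ht : 0 < t) (m : ℕ) :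
    ((2*t) ^ (-(a+1)/2) * (2:ℝ) ^ (-(2*(m:ℝ)+(a-1)/2)) * (z/(2*t)) ^ (2*(m:ℝ)) *
        Real.exp (-(z^2)/(4*t)) / ((Nat.factorial m) * Real.Gamma ((m : ℝ) + (a - 1)/2 + 1))) *
      ((1/(4*t)) ^ (-(2*(m:ℝ)+a+1)/2) * (1/2) * Real.Gamma ((m:ℝ)+(a-1)/2+1))
    = (z^2/(4*t))^m / (Nat.factorial m) * Real.exp (-(z^2)/(4*t)) := by
  have hm : (0:ℝ) ≤ m := Nat.cast_nonneg m
  have hG : (0:ℝ) < Real.Gamma ((m : ℝ) + (a - 1)/2 + 1) :=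
    Real.Gamma_pos_of_pos (by linarith)
  have hF : (0:ℝ) < (Nat.factorial m : ℝ) := by exact_mod_cast Nat.factorial_pos m
  have h2t : (0:ℝ) < 2*t := by positivity
  have hz2t : (0:ℝ) < z / (2*t) := by positivity
  have h4t : (0:ℝ) < 1/(4*t) := by positivity
  have hz4t : (0:ℝ) < z^2/(4*t) := by positivity
  have key : (2*t) ^ (-(a+1)/2) * (2:ℝ) ^ (-(2*(m:ℝ)+(a-1)/2)) * (z/(2*t)) ^ (2*(m:ℝ)) *
      ((1/(4*t)) ^ (-(2*(m:ℝ)+a+1)/2) * (1/2)) = (z^2/(4*t))^m := by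
    have hlog1 : log (2*t) = log 2 + log t := log_mul two_ne_zero ht.ne'
    have hlog4 : log (z/(2*t)) = log z - (log 2 + log t) := by
      rw [log_div hz.ne' h2t.ne', hlog1]
    have hlog5 : log (1/(4*t)) = -(2*log 2 + log t) := by
      rw [one_div, log_inv, log_mul (by norm_num) ht.ne',
        show (4:ℝ) = 2^2 by norm_num, log_pow]
      push_cast; ring
    have hlog6 : log (z^2/(4*t)) = 2*log z - (2*log 2 + log t) := by
      rw [log_div (by positivity) (by positivity), log_pow, log_mul (by norm_num) ht.ne',
        show (4:ℝ) = 2^2 by norm_num, log_pow]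
      push_cast; ring
    rw [← Real.rpow_natCast (z^2/(4*t)) m,
      show (1/2:ℝ) = rexp (-log 2) from by rw [Real.exp_neg, Real.exp_log two_pos]; norm_num]
    simp only [Real.rpow_def_of_pos h2t, Real.rpow_def_of_pos hz2t,
      Real.rpow_def_of_pos h4t, Real.rpow_def_of_pos hz4t, Real.rpow_def_of_pos two_pos]
    simp only [← Real.exp_add]
    rw [Real.exp_eq_exp, hlog1, hlog4, hlog5, hlog6]
    ring
  rw [show ∀ (n e f g b : ℝ), (n * e / (f*g)) * (b * (1/2) * g) = (n * (b * (1/2))) * e * (g/(f*g))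
      from fun _ _ _ _ _ => by ring]
  rw [key, show Real.Gamma ((m : ℝ) + (a - 1)/2 + 1) /
      ((Nat.factorial m : ℝ) * Real.Gamma ((m : ℝ) + (a - 1)/2 + 1)) = 1 / (Nat.factorial m : ℝ)
      from by rw [div_mul_eq_div_div_swap, div_self hG.ne']]
  ring

/-- For `a > -1`, `z, t > 0`: `∫₀^∞ p^{(a)}(z,ζ,t) ζ^a dζ = 1`. -/
theorem besselHeat_integral_one (a : ℝ) (ha : -1 < a) (z t : ℝ) (hz : 0 < z) (ht : 0 < t) :
    ∫ ζ in Set.Ioi (0:ℝ), besselHeat a z ζ t * ζ ^ a = 1 := by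
  set g : ℕ → ℝ → ℝ := fun m ζ =>
    (2*t) ^ (-(a+1)/2) * (2:ℝ) ^ (-(2*(m:ℝ)+(a-1)/2)) * (z/(2*t)) ^ (2*(m:ℝ)) *
      Real.exp (-(z^2)/(4*t)) / ((Nat.factorial m) * Real.Gamma ((m : ℝ) + (a - 1)/2 + 1)) *
      (ζ ^ (2*(m:ℝ)+a) * Real.exp (-(1/(4*t)) * ζ^2)) with hg
  have hKpos : ∀ m : ℕ, (0:ℝ) < (Nat.factorial m) * Real.Gamma ((m : ℝ) + (a - 1)/2 + 1) := by
    intro m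
    have hm : (0:ℝ) ≤ m := Nat.cast_nonneg m
    have : (0:ℝ) < (m : ℝ) + (a - 1)/2 + 1 := by linarith
    exact mul_pos (by exact_mod_cast Nat.factorial_pos m) (Real.Gamma_pos_of_pos this)
  have hq : ∀ m : ℕ, (-1:ℝ) < 2*(m:ℝ)+a := by
    intro m; have hm : (0:ℝ) ≤ m := Nat.cast_nonneg m; linarith
  have hb : (0:ℝ) < 1/(4*t) := by positivity
  -- integrability of each term
  have hInt : ∀ m : ℕ, IntegrableOn
      (fun ζ : ℝ => ζ ^ (2*(m:ℝ)+a) * Real.exp (-(1/(4*t)) * ζ^2)) (Set.Ioi 0) :=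
    fun m => integrableOn_rpow_mul_exp_neg_mul_sq hb (hq m)
  have hgInt : ∀ m : ℕ, IntegrableOn (g m) (Set.Ioi 0) := fun m => (hInt m).const_mul _
  -- value of each term's integral
  have hgval : ∀ m : ℕ, ∫ ζ in Set.Ioi (0:ℝ), g m ζ
      = (z^2/(4*t))^m / (Nat.factorial m) * Real.exp (-(z^2)/(4*t)) := by
    intro m
    rw [hg]
    rw [MeasureTheory.integral_const_mul]
    have hIv : ∫ ζ in Set.Ioi (0:ℝ), ζ ^ (2*(m:ℝ)+a) * Real.exp (-(1/(4*t)) * ζ^2)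
        = (1/(4*t)) ^ (-(2*(m:ℝ)+a+1)/2) * (1/2) * Real.Gamma ((m:ℝ)+(a-1)/2+1) := by
      simp_rw [← Real.rpow_two]
      rw [integral_rpow_mul_exp_neg_mul_rpow two_pos (hq m) hb,
        show (2*(m:ℝ)+a+1)/2 = (m:ℝ)+(a-1)/2+1 from by ring]
    rw [hIv]
    exact besselHeat_const_eq a ha z t hz ht m
  -- nonnegativity of each term on `Ioi 0`
  have hgnn : ∀ m : ℕ, 0 ≤ᵐ[volume.restrict (Set.Ioi (0:ℝ))] g m := by
    intro m
    refine (ae_restrict_iff' measurableSet_Ioi).2 (Filter.Eventually.of_forall fun ζ hζ => ?_)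
    have hζ' : (0:ℝ) < ζ := hζ
    exact mul_nonneg (div_nonneg (by positivity) (hKpos m).le)
      (mul_nonneg (Real.rpow_nonneg hζ'.le _) (Real.exp_pos _).le)
  -- measurability
  have hmeas : ∀ m : ℕ, AEStronglyMeasurable (g m) (volume.restrict (Set.Ioi (0:ℝ))) :=
    fun m => (hgInt m).aestronglyMeasurable
  -- summability of the term integrals
  have hEnn : ∀ m : ℕ, (0:ℝ) ≤ (z^2/(4*t))^m / (Nat.factorial m) * Real.exp (-(z^2)/(4*t)) := by
    intro m; positivity
  have hEsum : Summable (fun m : ℕ =>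
      (z^2/(4*t))^m / (Nat.factorial m) * Real.exp (-(z^2)/(4*t))) :=
    (Real.summable_pow_div_factorial _).mul_right _
  have hlint : ∑' m : ℕ, ∫⁻ ζ in Set.Ioi (0:ℝ), (‖g m ζ‖₊ : ENNReal) ≠ ⊤ := by
    have h1 : ∀ m : ℕ, ∫⁻ ζ in Set.Ioi (0:ℝ), (‖g m ζ‖₊ : ENNReal)
        = ENNReal.ofReal ((z^2/(4*t))^m / (Nat.factorial m) * Real.exp (-(z^2)/(4*t))) := by
      intro m
      rw [← hgval m, ofReal_integral_eq_lintegral_ofReal (hgInt m) (hgnn m)]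
      exact lintegral_congr_ae ((hgnn m).mono fun ζ h => Real.enorm_eq_ofReal h)
    simp_rw [h1]
    rw [← ENNReal.ofReal_tsum_of_nonneg hEnn hEsum]
    exact ENNReal.ofReal_ne_top
  -- pointwise expansion
  have hpt : Set.EqOn (fun ζ : ℝ => besselHeat a z ζ t * ζ ^ a)
      (fun ζ : ℝ => ∑' m : ℕ, g m ζ) (Set.Ioi 0) := by
    intro ζ hζ
    have hζ' : (0:ℝ) < ζ := hζ
    show besselHeat a z ζ t * ζ ^ a = ∑' m : ℕ, g m ζ
    rw [besselHeat, besselI, ← tsum_mul_left, ← tsum_mul_right, ← tsum_mul_right]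
    exact tsum_congr fun m => besselHeat_term_eq a ha z t ζ hz ht hζ' m
  calc ∫ ζ in Set.Ioi (0:ℝ), besselHeat a z ζ t * ζ ^ a
      = ∫ ζ in Set.Ioi (0:ℝ), ∑' m : ℕ, g m ζ :=
        setIntegral_congr_fun measurableSet_Ioi hpt
    _ = ∑' m : ℕ, ∫ ζ in Set.Ioi (0:ℝ), g m ζ := integral_tsum hmeas hlint
    _ = ∑' m : ℕ, (z^2/(4*t))^m / (Nat.factorial m) * Real.exp (-(z^2)/(4*t)) :=
        tsum_congr hgval
    _ = 1 := by
        rw [tsum_mul_right,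
          show ∑' m : ℕ, (z^2/(4*t))^m / (Nat.factorial m) = Real.exp (z^2/(4*t)) from by
            rw [Real.exp_eq_exp_ℝ, NormedSpace.exp_eq_tsum_div],
          ← Real.exp_add, show z^2/(4*t) + -(z^2)/(4*t) = 0 from by ring, Real.exp_zero]
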